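/- Let M be a Z_p-module, φ: G → Aut(M) an action of a group G on M with action length d < p. Then the set of invariants {m ∈ M : φ(g)(m) = m for all g ∈ G} equals {m ∈ M : log(φ)(g)(m) = 0 for all g ∈ G}, where log(φ)(g) = Σ_{k=1}^{p-1}(-1)^{k+1}(φ(g)-id)^k/k. In other words, H^0 of the group action equals H^0 of the associated Lie action. -/

import Mathlib

/-- Truncated exponential `∑_{k<p} f^k/k!` of an endomorphism of a `ℤ_[p]`-module. -/
noncomputable def texp (p : ℕ) [Fact p.Prime] {M : Type*} [AddCommGroup M] [Module ℤ_[p] M]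
    (f : Module.End ℤ_[p] M) : Module.End ℤ_[p] M :=
  ∑ k ∈ Finset.range p, Ring.inverse ((k.factorial : ℤ_[p])) • f ^ k

/-- Truncated logarithm `∑_{1≤k≤p-1} (-1)^{k+1}(g-1)^k/k`. -/
noncomputable def tlog (p : ℕ) [Fact p.Prime] {M : Type*} [AddCommGroup M] [Module ℤ_[p] M]
    (g : Module.End ℤ_[p] M) : Module.End ℤ_[p] M :=
  ∑ k ∈ Finset.Icc 1 (p - 1), ((-1 : ℤ_[p]) ^ (k + 1) * Ring.inverse ((k : ℤ_[p]))) • (g - 1) ^ k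


/-- `[U, G] = Span{m - g·m : m ∈ U, g ∈ G}`. -/
noncomputable def grBr (p : ℕ) [Fact p.Prime] {M G : Type*} [AddCommGroup M] [Module ℤ_[p] M] [Group G]
    (φ : G →* (M ≃ₗ[ℤ_[p]] M)) (U : Submodule ℤ_[p] M) : Submodule ℤ_[p] M :=
  Submodule.span ℤ_[p] {x | ∃ g : G, ∃ m ∈ U, x = m - φ g m}

/-- Iterated `[M, _i G]`, with `[M, _0 G] = M`. -/
noncomputable def grIter (p : ℕ) [Fact p.Prime] {M G : Type*} [AddCommGroup M] [Module ℤ_[p] M] [Group G]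
    (φ : G →* (M ≃ₗ[ℤ_[p]] M)) : ℕ → Submodule ℤ_[p] M
  | 0 => ⊤
  | (i+1) => grBr p φ (grIter p φ i)

/-- If `N m = (N^2 * Q) m` with `N` commuting with `Q` and `N^d = 0`, then `N m = 0`. -/
lemma key_nilp {R : Type*} [CommRing R] {M : Type*} [AddCommGroup M] [Module R M]
    (N Q : Module.End R M) (hc : Commute N Q) (d : ℕ) (hN : N ^ d = 0)
    (m : M) (hm : N m = (N ^ 2 * Q) m) : N m = 0 := by
  have hc' : Commute N (N * Q) := (Commute.refl N).mul_right hc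
  have hm' : N m = (N * (N * Q)) m := by
    rw [show N * (N * Q) = N ^ 2 * Q by rw [← mul_assoc, ← pow_two]]; exact hm
  have hj : ∀ j : ℕ, N m = (N * (N * Q) ^ j) m := by
    intro j
    induction j with
    | zero => simp
    | succ j ih =>
      have h1 : N * (N * Q) ^ j = (N * Q) ^ j * N := (hc'.pow_right j).eq
      have h2 : (N * Q) ^ j * (N * (N * Q)) = N * (N * Q) ^ (j + 1) := by
        rw [← mul_assoc, ← h1, mul_assoc, ← pow_succ]
      calc N m = (N * (N * Q) ^ j) m := ih
        _ = ((N * Q) ^ j * N) m := by rw [h1]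
        _ = ((N * Q) ^ j) (N m) := Module.End.mul_apply _ _ _
        _ = ((N * Q) ^ j) ((N * (N * Q)) m) := by rw [hm']
        _ = ((N * Q) ^ j * (N * (N * Q))) m := (Module.End.mul_apply _ _ _).symm
        _ = (N * (N * Q) ^ (j + 1)) m := by rw [h2]
  have := hj d
  rwa [hc.mul_pow, hN, zero_mul, mul_zero, LinearMap.zero_apply] at this

/-- `(1 - φ g)^i x ∈ grIter p φ i`. -/
lemma mem_grIter {p : ℕ} [Fact p.Prime] {M G : Type*} [AddCommGroup M] [Module ℤ_[p] M]
    [Group G] (φ : G →* (M ≃ₗ[ℤ_[p]] M)) (g : G) :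
    ∀ (i : ℕ) (x : M), ((1 - (φ g).toLinearMap) ^ i) x ∈ grIter p φ i
  | 0, x => Submodule.mem_top
  | (i+1), x => by
    have hx := mem_grIter φ g i x
    rw [pow_succ']
    refine Submodule.subset_span ⟨g, _, hx, ?_⟩
    simp [LinearMap.sub_apply]

/-- For a group action of length `d < p`, the group invariants coincide with the Lie
invariants of the associated `log` action:  `H⁰(G,M) = H⁰(log G, M)`. -/
theorem stmt9 {p : ℕ} [Fact p.Prime] {M G : Type*} [AddCommGroup M] [Module ℤ_[p] M] [Group G]
    (φ : G →* (M ≃ₗ[ℤ_[p]] M)) (d : ℕ) (hd : d < p) (h : grIter p φ d = ⊥) :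
    {m : M | ∀ g : G, φ g m = m} = {m : M | ∀ g : G, tlog p (φ g).toLinearMap m = 0} := by
  have hp2 : 2 ≤ p := (Fact.out : p.Prime).two_le
  ext m
  simp only [Set.mem_setOf_eq]
  constructor
  · intro hm g
    set T := (φ g).toLinearMap with hT
    have hNm : (T - 1) m = 0 := by
      simp [LinearMap.sub_apply, hT, hm g]
    unfold tlog
    rw [LinearMap.sum_apply]
    refine Finset.sum_eq_zero fun k hk => ?_
    rw [LinearMap.smul_apply]
    obtain ⟨k, rfl⟩ : ∃ j, k = j + 1 := ⟨k - 1, by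
      have := (Finset.mem_Icc.mp hk).1; omega⟩
    have hz : ((T - 1) ^ (k + 1)) m = 0 := by
      rw [pow_succ, Module.End.mul_apply, hNm, map_zero]
    rw [hz, smul_zero]
  · intro hm g
    set T := (φ g).toLinearMap with hT
    set N : Module.End ℤ_[p] M := T - 1 with hN
    -- nilpotency of N
    have hNd : N ^ d = 0 := by
      ext x
      have h1 : ((1 - T) ^ d) x = 0 := by
        have := mem_grIter φ g d x
        rw [h, Submodule.mem_bot] at this
        exact this
      have h2 : N ^ d = (-1 : Module.End ℤ_[p] M) ^ d * (1 - T) ^ d := by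
        rw [← neg_pow, hN, neg_sub]
      rw [LinearMap.zero_apply, h2, Module.End.mul_apply, h1, map_zero]
    -- split the log
    set c : ℕ → ℤ_[p] := fun k => (-1 : ℤ_[p]) ^ (k + 1) * Ring.inverse ((k : ℤ_[p])) with hc
    have hsplit : Finset.Icc 1 (p - 1) = insert 1 (Finset.Icc 2 (p - 1)) := by
      ext k
      simp only [Finset.mem_Icc, Finset.mem_insert]
      omega
    set Q : Module.End ℤ_[p] M := ∑ k ∈ Finset.Icc 2 (p - 1), c k • N ^ (k - 2) with hQ
    have hQc : Commute N Q := by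
      refine Commute.sum_right _ _ _ fun k _ => ?_
      exact ((Commute.refl N).pow_right (k - 2)).smul_right (c k)
    have hlog : tlog p T = N + N ^ 2 * Q := by
      unfold tlog
      rw [hsplit, Finset.sum_insert (by simp)]
      congr 1
      · simp [hN, Ring.inverse_one]
      · rw [hQ, Finset.mul_sum]
        refine Finset.sum_congr rfl fun k hk => ?_
        have hk2 : 2 ≤ k := (Finset.mem_Icc.mp hk).1
        rw [mul_smul_comm, ← pow_add]
        congr 2
        omega
    have h0 : N m + (N ^ 2 * Q) m = 0 := by
      have := hm g
      rw [← hT, hlog, LinearMap.add_apply] at this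
      exact this
    have hm' : N m = (N ^ 2 * (-Q)) m := by
      rw [mul_neg, LinearMap.neg_apply, eq_neg_iff_add_eq_zero.mpr h0]
    have hNm : N m = 0 := key_nilp N (-Q) (hQc.neg_right) d hNd m hm'
    have h1 : T m - m = 0 := hNm
    have h2 := sub_eq_zero.mp h1
    exact h2
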